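/- Let G=(V,E) be a graph on n vertices and π a 2-partition of V such that h₂(π) ≤ h₂(π⊖v) for every vertex v. Then c_π(v) ≤ √(n(n−1)/2) for every vertex v. -/

import Mathlib

open Finset

variable {V : Type*} [Fintype V] [DecidableEq V]

/-- A 2-partition of the vertex set is given by an indicator `π : V → Bool`
(the two clusters are the preimages of `true` and `false`).
Two vertices `u ≠ v` are in conflict if they are in the same cluster but not adjacent,
or in different clusters but adjacent. -/
def Conflict (G : SimpleGraph V) (π : V → Bool) (u v : V) : Prop :=
  u ≠ v ∧ ((π u = π v) ↔ ¬ G.Adj u v)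

instance (G : SimpleGraph V) [DecidableRel G.Adj] (π : V → Bool) (u v : V) :
    Decidable (Conflict G π u v) := by
  unfold Conflict; infer_instance

/-- `C_π(v)` : the set of vertices in conflict with `v`. -/
def conflictSet (G : SimpleGraph V) [DecidableRel G.Adj] (π : V → Bool) (v : V) : Finset V :=
  Finset.univ.filter (fun u => Conflict G π v u)

/-- `c_π(v)` : the conflict number of `v`. -/
def cNum (G : SimpleGraph V) [DecidableRel G.Adj] (π : V → Bool) (v : V) : ℕ :=
  (conflictSet G π v).card

/-- Flipping the set `F` : moving every vertex of `F` to the other cluster. -/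
def flipSet (π : V → Bool) (F : Finset V) : V → Bool :=
  fun v => if v ∈ F then !(π v) else π v

/-- `h₁(π)` : the total conflict number. -/
def h1 (G : SimpleGraph V) [DecidableRel G.Adj] (π : V → Bool) : ℕ :=
  ∑ v, cNum G π v

/-- `h₂(π)` : the sum of squared conflict numbers. -/
def h2 (G : SimpleGraph V) [DecidableRel G.Adj] (π : V → Bool) : ℕ :=
  ∑ v, (cNum G π v) ^ 2

section Aux

set_option linter.unusedSectionVars false

variable (G : SimpleGraph V) [DecidableRel G.Adj] (π : V → Bool)

lemma conflict_symm {u v : V} : Conflict G π u v ↔ Conflict G π v u := by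
  unfold Conflict
  constructor <;> rintro ⟨h1, h2⟩ <;>
    exact ⟨h1.symm, by rw [G.adj_comm] at h2; rw [eq_comm]; exact h2⟩

lemma mem_conflictSet {u v : V} : u ∈ conflictSet G π v ↔ Conflict G π v u := by
  simp [conflictSet]

lemma conflictSet_subset (v : V) : conflictSet G π v ⊆ univ.erase v := by
  intro u hu
  rw [mem_conflictSet] at hu
  exact mem_erase.mpr ⟨hu.1.symm, mem_univ u⟩

lemma cNum_le (v : V) : cNum G π v ≤ Fintype.card V - 1 := by
  have := card_le_card (conflictSet_subset G π v)
  rwa [card_erase_of_mem (mem_univ v), card_univ] at this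

lemma flip_apply (v u : V) : flipSet π {v} u = if u = v then !(π v) else π u := by
  unfold flipSet
  simp only [Finset.mem_singleton]
  split_ifs with h
  · rw [h]
  · rfl

lemma conflict_flip_of_ne {v u w : V} (hu : u ≠ v) (hw : w ≠ v) :
    Conflict G (flipSet π {v}) u w ↔ Conflict G π u w := by
  unfold Conflict
  rw [flip_apply, flip_apply, if_neg hu, if_neg hw]

lemma conflict_flip_v {v u : V} (hu : u ≠ v) :
    Conflict G (flipSet π {v}) v u ↔ ¬ Conflict G π v u := by
  unfold Conflict
  rw [flip_apply, flip_apply, if_pos rfl, if_neg hu]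
  cases π v <;> cases π u <;> simp [hu.symm] <;> tauto

lemma conflictSet_flip_self (v : V) :
    conflictSet G (flipSet π {v}) v = univ.erase v \ conflictSet G π v := by
  ext u
  simp only [mem_conflictSet, mem_sdiff, mem_erase, mem_univ, and_true]
  by_cases h : u = v
  · subst h
    simp [Conflict]
  · rw [conflict_flip_v G π h]
    tauto

lemma cNum_flip_self (v : V) :
    cNum G (flipSet π {v}) v = (Fintype.card V - 1) - cNum G π v := by
  unfold cNum
  rw [conflictSet_flip_self, card_sdiff_of_subset (conflictSet_subset G π v),
    card_erase_of_mem (mem_univ v), card_univ]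

lemma conflictSet_flip_mem {v u : V} (hu : u ≠ v) (h : u ∈ conflictSet G π v) :
    conflictSet G (flipSet π {v}) u = (conflictSet G π u).erase v := by
  have hvu : Conflict G π v u := (mem_conflictSet G π).mp h
  have huv : Conflict G π u v := (conflict_symm G π).mp hvu
  ext w
  simp only [mem_conflictSet, mem_erase]
  by_cases hw : w = v
  · subst hw
    rw [conflict_symm, conflict_flip_v G π hu]
    simp [hvu, huv]
  · rw [conflict_flip_of_ne G π hu hw]
    tauto

lemma conflictSet_flip_not_mem {v u : V} (hu : u ≠ v) (h : u ∉ conflictSet G π v) :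
    conflictSet G (flipSet π {v}) u = insert v (conflictSet G π u) := by
  have hvu : ¬ Conflict G π v u := fun hc => h ((mem_conflictSet G π).mpr hc)
  have huv : ¬ Conflict G π u v := fun hc => hvu ((conflict_symm G π).mp hc)
  ext w
  simp only [mem_conflictSet, mem_insert]
  by_cases hw : w = v
  · subst hw
    rw [conflict_symm, conflict_flip_v G π hu]
    simp [hvu, huv]
  · rw [conflict_flip_of_ne G π hu hw]
    constructor
    · exact Or.inr
    · rintro (rfl | hc)
      · exact absurd rfl hw
      · exact hc

lemma cNum_flip_mem {v u : V} (hu : u ≠ v) (h : u ∈ conflictSet G π v) :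
    cNum G (flipSet π {v}) u = cNum G π u - 1 := by
  unfold cNum
  rw [conflictSet_flip_mem G π hu h, card_erase_of_mem]
  rw [mem_conflictSet, conflict_symm] at h
  rw [mem_conflictSet]
  exact h

lemma cNum_flip_not_mem {v u : V} (hu : u ≠ v) (h : u ∉ conflictSet G π v) :
    cNum G (flipSet π {v}) u = cNum G π u + 1 := by
  unfold cNum
  rw [conflictSet_flip_not_mem G π hu h, card_insert_of_notMem]
  intro hv
  rw [mem_conflictSet] at hv
  exact h ((mem_conflictSet G π).mpr ((conflict_symm G π).mp hv))

lemma one_le_cNum_of_mem {v u : V} (h : u ∈ conflictSet G π v) : 1 ≤ cNum G π u := by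
  rw [mem_conflictSet, conflict_symm] at h
  have : v ∈ conflictSet G π u := (mem_conflictSet G π).mpr h
  exact card_pos.mpr ⟨v, this⟩

/-- Core counting inequality at a conflict-maximizing vertex. -/
lemma key_ineq (v : V) (hmin : h2 G π ≤ h2 G (flipSet π {v}))
    (hmax : ∀ u : V, cNum G π u ≤ cNum G π v) :
    2 * (cNum G π v) ^ 2 + 2 * cNum G π v ≤ Fintype.card V * (Fintype.card V - 1) := by
  classical
  set n := Fintype.card V with hn
  set c := cNum G π v with hc
  have hn1 : 1 ≤ n := Fintype.card_pos_iff.mpr ⟨v⟩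
  set S : Finset V := conflictSet G π v with hS
  set T : Finset V := univ.erase v \ S with hT
  have hST : Disjoint S T := Finset.disjoint_sdiff
  have hSsub : S ⊆ univ.erase v := conflictSet_subset G π v
  have hunion : S ∪ T = univ.erase v := Finset.union_sdiff_of_subset hSsub
  have hcardS : S.card = c := rfl
  have hcle : c ≤ n - 1 := cNum_le G π v
  have hcardT : T.card = (n - 1) - c := by
    rw [hT, card_sdiff_of_subset hSsub, card_erase_of_mem (mem_univ v), card_univ, hcardS]
  have hvnot : v ∉ univ.erase v := notMem_erase v univ
  have hsplit : ∀ f : V → ℕ, ∑ u : V, f u = f v + ∑ u ∈ S, f u + ∑ u ∈ T, f u := by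
    intro f
    rw [← Finset.insert_erase (mem_univ v), Finset.sum_insert hvnot, ← hunion,
      Finset.sum_union hST]
    ring
  have hmemS : ∀ u ∈ S, u ≠ v := fun u hu => (mem_erase.mp (hSsub hu)).1
  have hmemT : ∀ u ∈ T, u ≠ v ∧ u ∉ S := by
    intro u hu
    rw [hT, mem_sdiff, mem_erase] at hu
    exact ⟨hu.1.1, hu.2⟩
  have h2π : h2 G π = c ^ 2 + ∑ u ∈ S, (cNum G π u) ^ 2 + ∑ u ∈ T, (cNum G π u) ^ 2 := by
    unfold h2
    rw [hsplit (fun u => (cNum G π u) ^ 2)]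
  have hSfix : ∑ u ∈ S, (cNum G (flipSet π {v}) u) ^ 2 = ∑ u ∈ S, (cNum G π u - 1) ^ 2 :=
    Finset.sum_congr rfl fun u hu => by rw [cNum_flip_mem G π (hmemS u hu) hu]
  have hTfix : ∑ u ∈ T, (cNum G (flipSet π {v}) u) ^ 2 = ∑ u ∈ T, (cNum G π u + 1) ^ 2 :=
    Finset.sum_congr rfl fun u hu => by
      rw [cNum_flip_not_mem G π (hmemT u hu).1 (hmemT u hu).2]
  have h2π' : h2 G (flipSet π {v})
      = ((n - 1) - c) ^ 2 + ∑ u ∈ S, (cNum G π u - 1) ^ 2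
        + ∑ u ∈ T, (cNum G π u + 1) ^ 2 := by
    unfold h2
    rw [hsplit (fun u => (cNum G (flipSet π {v}) u) ^ 2)]
    beta_reduce
    rw [cNum_flip_self, hSfix, hTfix]
  -- move to integers
  have hmin' := hmin
  rw [h2π, h2π'] at hmin'
  set A : ℤ := ∑ u ∈ S, (cNum G π u : ℤ) with hA_def
  set B : ℤ := ∑ u ∈ T, (cNum G π u : ℤ) with hB_def
  have hmcast : (((n - 1) - c : ℕ) : ℤ) = (n : ℤ) - 1 - c := by
    rw [Nat.cast_sub hcle, Nat.cast_sub hn1]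
    push_cast
    ring
  have hZ : (c : ℤ) ^ 2 + ∑ u ∈ S, ((cNum G π u : ℤ)) ^ 2 + ∑ u ∈ T, ((cNum G π u : ℤ)) ^ 2
      ≤ ((n : ℤ) - 1 - c) ^ 2 + ∑ u ∈ S, ((cNum G π u : ℤ) - 1) ^ 2
        + ∑ u ∈ T, ((cNum G π u : ℤ) + 1) ^ 2 := by
    have h1 := Int.ofNat_le.mpr hmin'
    push_cast at h1
    rw [hmcast] at h1
    have hs : ∀ u ∈ S, ((cNum G π u - 1 : ℕ) : ℤ) ^ 2 = ((cNum G π u : ℤ) - 1) ^ 2 :=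
      fun u hu => by rw [Nat.cast_sub (one_le_cNum_of_mem G π hu), Nat.cast_one]
    rw [Finset.sum_congr rfl hs] at h1
    exact h1
  have hSexp : ∑ u ∈ S, ((cNum G π u : ℤ) - 1) ^ 2
      = ∑ u ∈ S, (cNum G π u : ℤ) ^ 2 - 2 * A + S.card := by
    have he : ∀ u ∈ S, ((cNum G π u : ℤ) - 1) ^ 2
        = (cNum G π u : ℤ) ^ 2 - 2 * (cNum G π u : ℤ) + 1 := fun u _ => by ring
    rw [Finset.sum_congr rfl he, Finset.sum_add_distrib, Finset.sum_sub_distrib,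
      ← Finset.mul_sum, Finset.sum_const, nsmul_eq_mul, mul_one]
  have hTexp : ∑ u ∈ T, ((cNum G π u : ℤ) + 1) ^ 2
      = ∑ u ∈ T, (cNum G π u : ℤ) ^ 2 + 2 * B + T.card := by
    have he : ∀ u ∈ T, ((cNum G π u : ℤ) + 1) ^ 2
        = (cNum G π u : ℤ) ^ 2 + 2 * (cNum G π u : ℤ) + 1 := fun u _ => by ring
    rw [Finset.sum_congr rfl he, Finset.sum_add_distrib, Finset.sum_add_distrib,
      ← Finset.mul_sum, Finset.sum_const, nsmul_eq_mul, mul_one]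
  rw [hSexp, hTexp] at hZ
  have hAc : (c : ℤ) ≤ A := by
    calc (c : ℤ) = ∑ u ∈ S, (1 : ℤ) := by
          rw [Finset.sum_const, nsmul_eq_mul, mul_one, hcardS]
      _ ≤ A := Finset.sum_le_sum fun u hu => by
          have := one_le_cNum_of_mem G π hu; omega
  have hBc : B ≤ ((n : ℤ) - 1 - c) * c := by
    calc B ≤ ∑ u ∈ T, (c : ℤ) := Finset.sum_le_sum fun u _ => by
          have := hmax u; omega
      _ = ((n : ℤ) - 1 - c) * c := by
          rw [Finset.sum_const, nsmul_eq_mul, hcardT, hmcast]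
  have hScard : ((S.card : ℕ) : ℤ) = (c : ℤ) := Nat.cast_inj.mpr hcardS
  have hTcard : ((T.card : ℕ) : ℤ) = (n : ℤ) - 1 - c := by rw [hcardT, hmcast]
  rw [hScard, hTcard] at hZ
  zify [hn1]
  nlinarith [hZ, hAc, hBc]

end Aux


/-- Lemma 9: if `π` is a 2-partition with `h₂(π) ≤ h₂(π ⊖ v)` for every
vertex `v`, then `c_π(v) ≤ √(n(n−1)/2)` for every vertex `v`. -/
theorem cNum_le_of_flip_min_h2 (G : SimpleGraph V) [DecidableRel G.Adj] (π : V → Bool)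
    (hmin : ∀ v : V, h2 G π ≤ h2 G (flipSet π {v})) :
    ∀ v : V, (cNum G π v : ℝ) ≤
      Real.sqrt ((Fintype.card V : ℝ) * ((Fintype.card V : ℝ) - 1) / 2) := by
  intro v₀
  obtain ⟨v, -, hv⟩ := Finset.exists_max_image univ (cNum G π) ⟨v₀, mem_univ v₀⟩
  have hkey := key_ineq G π v (hmin v) (fun u => hv u (mem_univ u))
  have hn1 : 1 ≤ Fintype.card V := Fintype.card_pos_iff.mpr ⟨v⟩
  have hcast : ((Fintype.card V * (Fintype.card V - 1) : ℕ) : ℝ)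
      = (Fintype.card V : ℝ) * ((Fintype.card V : ℝ) - 1) := by
    rw [Nat.cast_mul, Nat.cast_sub hn1]
    push_cast
    ring
  have hR : 2 * (cNum G π v : ℝ) ^ 2 + 2 * (cNum G π v : ℝ)
      ≤ (Fintype.card V : ℝ) * ((Fintype.card V : ℝ) - 1) := by
    rw [← hcast]
    exact_mod_cast hkey
  have hle : (cNum G π v₀ : ℝ) ≤ (cNum G π v : ℝ) := by
    exact_mod_cast hv v₀ (mem_univ v₀)
  have hc0 : (0 : ℝ) ≤ (cNum G π v : ℝ) := Nat.cast_nonneg _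
  have hsq : (0 : ℝ) ≤ (cNum G π v : ℝ) ^ 2 := sq_nonneg _
  have hnn : (0 : ℝ) ≤ (Fintype.card V : ℝ) * ((Fintype.card V : ℝ) - 1) / 2 := by
    nlinarith
  refine le_trans hle ?_
  rw [Real.le_sqrt (by positivity) hnn]
  nlinarith
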